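/- Let q be odd, let S be an arc of F_q^k with |S| ≥ k, a fixed linear order, and t = q+k−1−|S| ≥ 0, let tangent polynomials f_A be chosen for all subsets A of S of size k−2, and let (α_A), (α_C) be compatible families of nonzero scalars. Let E be a subset of S of size k+2t−1 and let φ be the associated polynomial. Then for every subset A of S of size k−2, writing A = {a_1, …, a_{k−2}} in increasing order, one has φ(X, a_1, …, a_{k−2}) = α_A² · f_A(X)² for every X ∈ F_q^k. -/

import Mathlib

open Finset

variable {F : Type*} [Field F]

/-- An *arc*: every `k`-subset is a set of linearly independent vectors
(hence a basis of `F^k`). -/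
def IsArc {k : ℕ} (S : Set (Fin k → F)) : Prop :=
  ∀ T : Finset (Fin k → F), ↑T ⊆ S → T.card = k →
    LinearIndependent F (Subtype.val : {x // x ∈ T} → (Fin k → F))

/-- The *weight* of a vector: its number of nonzero coordinates. -/
noncomputable def weight {ι : Type*} (w : ι → F) : ℕ := Nat.card {i // w i ≠ 0}

/-- `det(u, C)`: the determinant of the `k × k` matrix whose first row is `u` and whose
remaining rows are the vectors `g i`, `i ∈ C`, listed in increasing order of the index set. -/
noncomputable def detWith {k m : ℕ} (g : Fin m → Fin k → F)
    (u : Fin k → F) (C : Finset (Fin m)) : F :=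
  if h : C.card + 1 = k then
    Matrix.det (Matrix.of ((Fin.cons u fun j => g (C.orderEmbOfFin rfl j)) ∘ Fin.cast h.symm))
  else 0

/-- The matrix `M_n` associated to an ordered arc `g : Fin m → (Fin k → F)`. -/
noncomputable def arcMatrix {k m : ℕ} (g : Fin m → Fin k → F) (n : ℕ) :
    Matrix {C : Finset (Fin m) // C.card = k - 1}
      {AE : Finset (Fin m) × Finset (Fin m) //
        AE.2.card = m - n ∧ AE.1 ⊆ AE.2 ∧ AE.1.card = k - 2} F :=
  fun C AE =>
    if AE.1.1 ⊆ C.1 then ∏ u ∈ Finset.univ \ AE.1.2, detWith g (g u) C.1 else 0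

/-- `det(z, Y₁, …, Y_{k-1})`. -/
noncomputable def detRows {k : ℕ} (z : Fin k → F) (Y : Fin (k - 1) → Fin k → F) : F :=
  if h : k - 1 + 1 = k then Matrix.det (Matrix.of ((Fin.cons z Y) ∘ Fin.cast h.symm)) else 0

/-- `d_A(u,v) = det(u, v, p₁, …, p_{k-2})` for an ordered tuple `A = (p₁, …, p_{k-2})`. -/
noncomputable def dA {k : ℕ} (p : Fin (k - 2) → Fin k → F) (u v : Fin k → F) : F :=
  if h : k - 2 + 1 + 1 = k then
    Matrix.det (Matrix.of ((Fin.cons u (Fin.cons v p)) ∘ Fin.cast h.symm))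
  else 0

/-- `f` is a tangent polynomial for the `(k-2)`-subset `A` of the arc `S`:
a product of `t` pairwise linearly independent linear forms whose kernels meet `S` in `A`. -/
def IsTangentPoly {k : ℕ} (t : ℕ) (S A : Set (Fin k → F)) (f : (Fin k → F) → F) : Prop :=
  ∃ α : Fin t → ((Fin k → F) →ₗ[F] F),
    (∀ i j, i ≠ j → LinearIndependent F ![α i, α j]) ∧
    (∀ i, S ∩ {x | α i x = 0} = A) ∧
    ∀ x, f x = ∏ i, α i x

/-- Compatible families `(α_A)` (on `(k-2)`-subsets) and `(α_C)` (on `(k-1)`-subsets)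
of nonzero scalars, relative to the tangent polynomials `f`. -/
def CompatibleFamilies {k m : ℕ} (t : ℕ) (g : Fin m → Fin k → F)
    (f : Finset (Fin m) → (Fin k → F) → F) (a c : Finset (Fin m) → F) : Prop :=
  (∀ A : Finset (Fin m), A.card = k - 2 → a A ≠ 0) ∧
  (∀ C : Finset (Fin m), C.card = k - 1 → c C ≠ 0) ∧
  ∀ A : Finset (Fin m), A.card = k - 2 → ∀ e, e ∉ A →
    c (insert e A) =
      (-1 : F) ^ ((A.filter fun i => e < i).card * (t + 1)) * a A * f A (g e)

/-- The polynomial `φ(Y₁, …, Y_{k-1}) = Σ_C (α_C)^e ∏_{z ∈ E∖C} det(z,Y)/det(z,C)`. -/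
noncomputable def phiPoly {k M : ℕ} (e : ℕ) (g : Fin M → Fin k → F)
    (c : Finset (Fin M) → F) (E : Finset (Fin M)) (Y : Fin (k - 1) → Fin k → F) : F :=
  ∑ C ∈ E.powersetCard (k - 1), (c C) ^ e *
    ∏ z ∈ E \ C, detRows (g z) Y / detWith g (g z) C

/-- `(G, n)` has *Property W*. -/
def PropertyW {k m : ℕ} (g : Fin m → Fin k → F) (n : ℕ) : Prop :=
  ∀ A : Finset (Fin m), A.card = k - 2 →
    ∃ (C : Finset (Fin m)) (Cs : Fin (m - n - k + 1) → Finset (Fin m)),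
      C.card = k - 1 ∧ A ⊆ C ∧
      (∀ i, (Cs i).card = k - 1 ∧ A ⊆ Cs i ∧ Cs i ≠ C) ∧
      Function.Injective Cs ∧
      ∀ i, ∃ x, ∀ D : {C : Finset (Fin m) // C.card = k - 1},
        ((arcMatrix g n).mulVec x) D ≠ 0 ↔ (D.1 = C ∨ D.1 = Cs i)


section Stmt14AuxSec
open Polynomial Function
namespace Stmt14Aux


lemma natDegree_lin_le (a b : F) : (C a * X + C b).natDegree ≤ 1 := by
  apply (natDegree_add_le _ _).trans
  apply max_le
  · exact (natDegree_C_mul_le _ _).trans (by simp)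
  · simp

lemma coeff_card_prod_linear {ι : Type*} [DecidableEq ι] (s : Finset ι) (p q : ι → F) :
    (∏ i ∈ s, (C (p i) * X + C (q i))).coeff s.card = ∏ i ∈ s, p i := by
  induction s using Finset.induction with
  | empty => simp
  | @insert a s ha ih =>
    rw [Finset.prod_insert ha, Finset.prod_insert ha, Finset.card_insert_of_notMem ha]
    have hdeg : (∏ i ∈ s, (C (p i) * X + C (q i))).natDegree ≤ s.card := by
      apply (natDegree_prod_le _ _).trans
      have : ∑ i ∈ s, (C (p i) * X + C (q i)).natDegree ≤ ∑ _i ∈ s, 1 := by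
        apply Finset.sum_le_sum
        intro i _
        exact natDegree_lin_le _ _
      simpa using this
    have h1 : ((C (p a) * X + C (q a)) * ∏ i ∈ s, (C (p i) * X + C (q i)))
        = C (p a) * (X * ∏ i ∈ s, (C (p i) * X + C (q i)))
          + C (q a) * ∏ i ∈ s, (C (p i) * X + C (q i)) := by ring
    rw [h1, coeff_add, coeff_C_mul, coeff_C_mul, coeff_X_mul, ih,
      coeff_eq_zero_of_natDegree_lt (lt_of_le_of_lt hdeg (Nat.lt_succ_self _)), mul_zero, add_zero]

/-- "Binary form of degree n" representation. -/
def IsBF (n : ℕ) (P : F → F → F) : Prop :=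
  ∃ (ι : Type) (sj : Finset ι) (c : ι → F) (pp qq : ι → Fin n → F),
    ∀ s u, P s u = ∑ j ∈ sj, c j * ∏ i, (pp j i * s + qq j i * u)

section BF

variable {n : ℕ} {ι : Type} (sj : Finset ι) (c : ι → F) (pp qq : ι → Fin n → F)

noncomputable def BFpoly : F[X] := ∑ j ∈ sj, C (c j) * ∏ i, (C (pp j i) * X + C (qq j i))

lemma BFpoly_natDegree_le : (BFpoly sj c pp qq).natDegree ≤ n := by
  apply natDegree_sum_le_of_forall_le
  intro j _
  apply (natDegree_C_mul_le _ _).trans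
  apply (natDegree_prod_le _ _).trans
  have : ∑ i : Fin n, (C (pp j i) * X + C (qq j i)).natDegree ≤ ∑ _i : Fin n, 1 := by
    apply Finset.sum_le_sum
    intro i _
    exact natDegree_lin_le _ _
  simpa using this

lemma BFpoly_eval_homog (x u : F) :
    ∑ j ∈ sj, c j * ∏ i, (pp j i * (x * u) + qq j i * u)
      = u ^ n * (BFpoly sj c pp qq).eval x := by
  rw [BFpoly, eval_finset_sum, Finset.mul_sum]
  apply Finset.sum_congr rfl
  intro j _
  have h : ∀ i ∈ (univ : Finset (Fin n)),
      pp j i * (x * u) + qq j i * u = u * (pp j i * x + qq j i) := fun i _ => by ring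
  rw [Finset.prod_congr rfl h, Finset.prod_mul_distrib, Finset.prod_const]
  simp only [eval_mul, eval_C, eval_prod, eval_add, eval_X, card_univ, Fintype.card_fin]
  ring

lemma BFpoly_coeff_top (s' : F) :
    ∑ j ∈ sj, c j * ∏ i, (pp j i * s' + qq j i * 0)
      = s' ^ n * (BFpoly sj c pp qq).coeff n := by
  rw [BFpoly, finset_sum_coeff, Finset.mul_sum]
  apply Finset.sum_congr rfl
  intro j _
  rw [coeff_C_mul]
  have h2 : (∏ i, (C (pp j i) * X + C (qq j i))).coeff n
      = (∏ i, (C (pp j i) * X + C (qq j i))).coeff (univ : Finset (Fin n)).card := by simp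
  rw [h2, coeff_card_prod_linear]
  have h : ∀ i ∈ (univ : Finset (Fin n)),
      pp j i * s' + qq j i * 0 = pp j i * s' := fun i _ => by ring
  rw [Finset.prod_congr rfl h, Finset.prod_mul_distrib, Finset.prod_const]
  simp only [card_univ, Fintype.card_fin]
  ring

end BF

lemma BF_ext {n : ℕ} {P₁ P₂ : F → F → F} (h₁ : IsBF n P₁) (h₂ : IsBF n P₂)
    (v : Fin (n + 1) → F × F) (hv0 : ∀ e, v e ≠ 0)
    (hvp : ∀ e e', e ≠ e' → (v e).1 * (v e').2 ≠ (v e').1 * (v e).2)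
    (hagree : ∀ e, P₁ (v e).1 (v e).2 = P₂ (v e).1 (v e).2) :
    ∀ s u, P₁ s u = P₂ s u := by
  classical
  obtain ⟨ι₁, s₁, c₁, p₁, q₁, hrep₁⟩ := h₁
  obtain ⟨ι₂, s₂, c₂, p₂, q₂, hrep₂⟩ := h₂
  set h₁' := BFpoly s₁ c₁ p₁ q₁ with hh₁
  set h₂' := BFpoly s₂ c₂ p₂ q₂ with hh₂
  have heval₁ : ∀ x u : F, P₁ (x * u) u = u ^ n * h₁'.eval x := fun x u => by
    rw [hrep₁]; exact BFpoly_eval_homog _ _ _ _ x u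
  have heval₂ : ∀ x u : F, P₂ (x * u) u = u ^ n * h₂'.eval x := fun x u => by
    rw [hrep₂]; exact BFpoly_eval_homog _ _ _ _ x u
  have htop₁ : ∀ s : F, P₁ s 0 = s ^ n * h₁'.coeff n := fun s => by
    rw [hrep₁]; exact BFpoly_coeff_top _ _ _ _ s
  have htop₂ : ∀ s : F, P₂ s 0 = s ^ n * h₂'.coeff n := fun s => by
    rw [hrep₂]; exact BFpoly_coeff_top _ _ _ _ s
  have hroot : ∀ e, (v e).2 ≠ 0 → (h₁' - h₂').eval ((v e).1 * ((v e).2)⁻¹) = 0 := by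
    intro e hu
    have h := hagree e
    have hx : (v e).1 * ((v e).2)⁻¹ * (v e).2 = (v e).1 := by field_simp
    rw [← hx, heval₁, heval₂] at h
    have h' := mul_left_cancel₀ (pow_ne_zero n hu) h
    simp [eval_sub, h']
  have hinj : ∀ e e', (v e).2 ≠ 0 → (v e').2 ≠ 0 →
      (v e).1 * ((v e).2)⁻¹ = (v e').1 * ((v e').2)⁻¹ → e = e' := by
    intro e e' hu hu' hx
    by_contra hne
    apply hvp e e' hne
    field_simp at hx
    linear_combination hx
  have hDdeg : (h₁' - h₂').natDegree ≤ n :=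
    (natDegree_sub_le _ _).trans (by
      simp only [sup_le_iff]
      exact ⟨BFpoly_natDegree_le _ _ _ _, BFpoly_natDegree_le _ _ _ _⟩)
  have hD : h₁' - h₂' = 0 := by
    by_contra hne
    by_cases hcase : ∃ e₀, (v e₀).2 = 0
    · obtain ⟨e₀, he₀⟩ := hcase
      have hs₀ : (v e₀).1 ≠ 0 := fun h0 => hv0 e₀ (Prod.ext h0 he₀)
      have hctop : (h₁' - h₂').coeff n = 0 := by
        have h := hagree e₀
        rw [he₀, htop₁, htop₂] at h
        have := mul_left_cancel₀ (pow_ne_zero n hs₀) h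
        rw [coeff_sub, this, sub_self]
      have hlt : (h₁' - h₂').natDegree < n := by
        rcases lt_or_eq_of_le hDdeg with h | h
        · exact h
        · exfalso
          apply hne
          apply leadingCoeff_eq_zero.mp
          rw [leadingCoeff, h, hctop]
      have hu' : ∀ e : {e : Fin (n + 1) // e ≠ e₀}, (v e.1).2 ≠ 0 := by
        intro ⟨e, he⟩ h0
        apply hvp e e₀ he
        rw [he₀, h0]
        ring
      have := Polynomial.eq_zero_of_natDegree_lt_card_of_eval_eq_zero (h₁' - h₂')
        (f := fun e : {e : Fin (n + 1) // e ≠ e₀} => (v e.1).1 * ((v e.1).2)⁻¹)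
        (fun e e' h => Subtype.ext (hinj e.1 e'.1 (hu' e) (hu' e') h))
        (fun e => hroot e.1 (hu' e)) ?_
      · exact hne this
      · rw [Fintype.card_subtype_compl, Fintype.card_subtype_eq]
        simpa using hlt
    · push_neg at hcase
      have := Polynomial.eq_zero_of_natDegree_lt_card_of_eval_eq_zero (h₁' - h₂')
        (f := fun e : Fin (n + 1) => (v e).1 * ((v e).2)⁻¹)
        (fun e e' h => hinj e e' (hcase e) (hcase e') h)
        (fun e => hroot e (hcase e)) ?_
      · exact hne this
      · simpa using Nat.lt_succ_of_le hDdeg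
  have hEq : h₁' = h₂' := sub_eq_zero.mp hD
  intro s u
  by_cases hu : u = 0
  · rw [hu, htop₁, htop₂, hEq]
  · have hs : s = s * u⁻¹ * u := by field_simp
    rw [hs, heval₁, heval₂, hEq]



section Tup

variable {k : ℕ} {α : Type*}

/-- Single-cons row tuple `(u, v₁, …, v_{k-1})`. -/
def rtup (h1 : k - 1 + 1 = k) (u : α) (vv : Fin (k - 1) → α) : Fin k → α :=
  (Fin.cons u vv) ∘ Fin.cast h1.symm

/-- Double-cons row tuple `(u, x, w₁, …, w_{k-2})`. -/
def ctup (h1 : k - 1 + 1 = k) (h2 : k - 1 = k - 2 + 1) (u x : α) (w : Fin (k - 2) → α) :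
    Fin k → α :=
  rtup h1 u ((Fin.cons x w) ∘ Fin.cast h2)

lemma fin_cases012 (h2 : k - 1 = k - 2 + 1) (i : Fin k) :
    i = ⟨0, by omega⟩ ∨ i = ⟨1, by omega⟩ ∨ ∃ j : Fin (k - 2), i = ⟨(j : ℕ) + 2, by omega⟩ := by
  rcases i with ⟨iv, hiv⟩
  rcases iv with _ | (_ | j)
  · left; rfl
  · right; left; rfl
  · right; right; exact ⟨⟨j, by omega⟩, rfl⟩

lemma rtup_val0 (h1 : k - 1 + 1 = k) (u : α) (vv : Fin (k - 1) → α) (hk0 : 0 < k) :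
    rtup h1 u vv ⟨0, hk0⟩ = u := by
  simp only [rtup, comp_apply]
  have h : Fin.cast h1.symm (⟨0, hk0⟩ : Fin k) = 0 := rfl
  rw [h, Fin.cons_zero]

lemma rtup_val_succ (h1 : k - 1 + 1 = k) (u : α) (vv : Fin (k - 1) → α) (j : Fin (k - 1)) :
    rtup h1 u vv ⟨(j : ℕ) + 1, by omega⟩ = vv j := by
  simp only [rtup, comp_apply]
  have h : Fin.cast h1.symm (⟨(j : ℕ) + 1, by omega⟩ : Fin k) = Fin.succ j := rfl
  rw [h, Fin.cons_succ]

lemma ctup_val0 (h1 : k - 1 + 1 = k) (h2 : k - 1 = k - 2 + 1) (u x : α) (w : Fin (k - 2) → α)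
    (hk0 : 0 < k) : ctup h1 h2 u x w ⟨0, hk0⟩ = u :=
  rtup_val0 h1 u _ hk0

lemma ctup_val1 (h1 : k - 1 + 1 = k) (h2 : k - 1 = k - 2 + 1) (u x : α) (w : Fin (k - 2) → α)
    (hk1 : 1 < k) : ctup h1 h2 u x w ⟨1, hk1⟩ = x := by
  have h0 := rtup_val_succ h1 u ((Fin.cons x w) ∘ Fin.cast h2) ⟨0, by omega⟩
  have he : (⟨1, hk1⟩ : Fin k) = ⟨((⟨0, by omega⟩ : Fin (k - 1)) : ℕ) + 1, by omega⟩ := rfl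
  rw [ctup, he, h0]
  simp only [comp_apply]
  have h : Fin.cast h2 (⟨0, by omega⟩ : Fin (k - 1)) = 0 := rfl
  rw [h, Fin.cons_zero]

lemma ctup_val2 (h1 : k - 1 + 1 = k) (h2 : k - 1 = k - 2 + 1) (u x : α) (w : Fin (k - 2) → α)
    (j0 : Fin (k - 2)) : ctup h1 h2 u x w ⟨(j0 : ℕ) + 2, by omega⟩ = w j0 := by
  have h0 := rtup_val_succ h1 u ((Fin.cons x w) ∘ Fin.cast h2) ⟨(j0 : ℕ) + 1, by omega⟩
  have he : (⟨(j0 : ℕ) + 2, by omega⟩ : Fin k)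
      = ⟨((⟨(j0 : ℕ) + 1, by omega⟩ : Fin (k - 1)) : ℕ) + 1, by omega⟩ := rfl
  rw [ctup, he, h0]
  simp only [comp_apply]
  have h : Fin.cast h2 (⟨(j0 : ℕ) + 1, by omega⟩ : Fin (k - 1)) = Fin.succ j0 := rfl
  rw [h, Fin.cons_succ]

lemma ctup_comp {β : Type*} (h1 : k - 1 + 1 = k) (h2 : k - 1 = k - 2 + 1)
    (f : α → β) (u x : α) (w : Fin (k - 2) → α) :
    f ∘ (ctup h1 h2 u x w) = ctup h1 h2 (f u) (f x) (f ∘ w) := by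
  funext i
  rcases fin_cases012 h2 i with rfl | rfl | ⟨j, rfl⟩
  · rw [comp_apply, ctup_val0, ctup_val0]
  · rw [comp_apply, ctup_val1, ctup_val1]
  · rw [comp_apply, ctup_val2, ctup_val2, comp_apply]

lemma ctup_eq_rtup_comp {M : ℕ} (h1 : k - 1 + 1 = k) (h2 : k - 1 = k - 2 + 1)
    (g : Fin M → α) (u : α) (e : Fin M) (w : Fin (k - 2) → Fin M) :
    ctup h1 h2 u (g e) (g ∘ w) = rtup h1 u (g ∘ ((Fin.cons e w) ∘ Fin.cast h2)) := by
  funext i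
  rcases fin_cases012 h2 i with rfl | rfl | ⟨j, rfl⟩
  · rw [ctup_val0, rtup_val0]
  · have he : (⟨1, by omega⟩ : Fin k) = ⟨((⟨0, by omega⟩ : Fin (k - 1)) : ℕ) + 1, by omega⟩ := rfl
    rw [ctup_val1, he, rtup_val_succ]
    simp only [comp_apply]
    have h : Fin.cast h2 (⟨0, by omega⟩ : Fin (k - 1)) = 0 := rfl
    rw [h, Fin.cons_zero]
  · have he : (⟨(j : ℕ) + 2, by omega⟩ : Fin k)
        = ⟨((⟨(j : ℕ) + 1, by omega⟩ : Fin (k - 1)) : ℕ) + 1, by omega⟩ := rfl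
    rw [ctup_val2, he, rtup_val_succ]
    simp only [comp_apply]
    have h : Fin.cast h2 (⟨(j : ℕ) + 1, by omega⟩ : Fin (k - 1)) = Fin.succ j := rfl
    rw [h, Fin.cons_succ]

lemma rtup_injective {M : ℕ} (h1 : k - 1 + 1 = k) {e : Fin M} {vv : Fin (k - 1) → Fin M}
    (hv : Injective vv) (he : e ∉ Set.range vv) : Injective (rtup h1 e vv) :=
  (Fin.cons_injective_of_injective he hv).comp (Fin.cast_injective _)

lemma cons_cast_injective {M : ℕ} (h2 : k - 1 = k - 2 + 1) {e : Fin M}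
    {w : Fin (k - 2) → Fin M} (hw : Injective w) (he : e ∉ Set.range w) :
    Injective ((Fin.cons e w) ∘ Fin.cast h2) :=
  (Fin.cons_injective_of_injective he hw).comp (Fin.cast_injective _)

lemma cons_cast_range {M : ℕ} (h2 : k - 1 = k - 2 + 1) (e : Fin M) (w : Fin (k - 2) → Fin M) :
    Set.range ((Fin.cons e w) ∘ Fin.cast h2) = {e} ∪ Set.range w := by
  rw [Set.range_comp, Set.range_eq_univ.mpr, Set.image_univ, Fin.range_cons, Set.insert_eq]
  intro x
  exact ⟨Fin.cast h2.symm x, by ext; simp⟩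

end Tup

section Det

variable {k M : ℕ}

lemma of_row (f : Fin k → Fin k → F) (i : Fin k) : Matrix.of f i = f i := rfl

/-- One row of a matrix singled out, as a linear map. -/
noncomputable def rowLin (M₀ : Matrix (Fin k) (Fin k) F) (i : Fin k) :
    (Fin k → F) →ₗ[F] F where
  toFun X := (M₀.updateRow i X).det
  map_add' u v := Matrix.det_updateRow_add M₀ i u v
  map_smul' c u := by simpa using Matrix.det_updateRow_smul M₀ i c u

lemma ctup_updateRow (h1 : k - 1 + 1 = k) (h2 : k - 1 = k - 2 + 1) (hk1 : 1 < k)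
    (u x₀ x : Fin k → F) (w : Fin (k - 2) → Fin k → F) :
    Matrix.of (ctup h1 h2 u x w) =
      Matrix.updateRow (Matrix.of (ctup h1 h2 u x₀ w)) ⟨1, hk1⟩ x := by
  funext i
  rw [of_row]
  rcases fin_cases012 h2 i with rfl | rfl | ⟨j, rfl⟩
  · rw [Matrix.updateRow_ne (by intro h; have := congrArg Fin.val h; simp at this), of_row,
      ctup_val0, ctup_val0]
  · rw [Matrix.updateRow_self, ctup_val1]
  · rw [Matrix.updateRow_ne (by intro h; have := congrArg Fin.val h; simp at this), of_row,
      ctup_val2, ctup_val2]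

/-- The linear form `X ↦ det (u, X, w₁, …, w_{k-2})`. -/
noncomputable def lform (h1 : k - 1 + 1 = k) (h2 : k - 1 = k - 2 + 1) (hk1 : 1 < k)
    (u : Fin k → F) (w : Fin (k - 2) → Fin k → F) : (Fin k → F) →ₗ[F] F :=
  rowLin (Matrix.of (ctup h1 h2 u 0 w)) ⟨1, hk1⟩

lemma lform_apply (h1 : k - 1 + 1 = k) (h2 : k - 1 = k - 2 + 1) (hk1 : 1 < k)
    (u : Fin k → F) (w : Fin (k - 2) → Fin k → F) (X : Fin k → F) :
    lform h1 h2 hk1 u w X = (Matrix.of (ctup h1 h2 u X w)).det := by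
  have h : lform h1 h2 hk1 u w X
      = (Matrix.updateRow (Matrix.of (ctup h1 h2 u 0 w)) ⟨1, hk1⟩ X).det := rfl
  rw [h, ← ctup_updateRow]

lemma det_ctup_zero_row01 (h1 : k - 1 + 1 = k) (h2 : k - 1 = k - 2 + 1) (hk1 : 1 < k)
    {u x : Fin k → F} {w : Fin (k - 2) → Fin k → F} (hux : u = x) :
    (Matrix.of (ctup h1 h2 u x w)).det = 0 := by
  apply Matrix.det_zero_of_row_eq (i := (⟨0, by omega⟩ : Fin k)) (j := ⟨1, hk1⟩)
  · intro h
    have := congrArg Fin.val h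
    simp at this
  · exact ((ctup_val0 h1 h2 u x w (by omega)).trans hux).trans
      (ctup_val1 h1 h2 u x w hk1).symm

lemma det_ctup_zero_row0w (h1 : k - 1 + 1 = k) (h2 : k - 1 = k - 2 + 1)
    {u x : Fin k → F} {w : Fin (k - 2) → Fin k → F} (j0 : Fin (k - 2)) (hu : u = w j0) :
    (Matrix.of (ctup h1 h2 u x w)).det = 0 := by
  apply Matrix.det_zero_of_row_eq (i := (⟨0, by omega⟩ : Fin k))
    (j := ⟨(j0 : ℕ) + 2, by omega⟩)
  · intro h
    have := congrArg Fin.val h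
    simp at this
  · exact ((ctup_val0 h1 h2 u x w (by omega)).trans hu).trans
      (ctup_val2 h1 h2 u x w j0).symm

lemma det_ctup_zero_row1w (h1 : k - 1 + 1 = k) (h2 : k - 1 = k - 2 + 1) (hk1 : 1 < k)
    {u x : Fin k → F} {w : Fin (k - 2) → Fin k → F} (j0 : Fin (k - 2)) (hx : x = w j0) :
    (Matrix.of (ctup h1 h2 u x w)).det = 0 := by
  apply Matrix.det_zero_of_row_eq (i := (⟨1, hk1⟩ : Fin k))
    (j := ⟨(j0 : ℕ) + 2, by omega⟩)
  · intro h
    have := congrArg Fin.val h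
    simp at this
  · exact ((ctup_val1 h1 h2 u x w hk1).trans hx).trans
      (ctup_val2 h1 h2 u x w j0).symm

/-- Reordering the last `k-1` rows by a fixed permutation changes the determinant by a fixed
sign, uniformly in the first row and in the row values. -/
lemma det_reindex (h1 : k - 1 + 1 = k) (ι₁ ι₂ : Fin (k - 1) → Fin M)
    (hinj1 : Injective ι₁) (hinj2 : Injective ι₂) (hr : Set.range ι₁ = Set.range ι₂) :
    ∃ ε : ℤˣ, ∀ (w : Fin M → Fin k → F) (u : Fin k → F),
      (Matrix.of (rtup h1 u (w ∘ ι₁))).det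
        = ((ε : ℤ) : F) * (Matrix.of (rtup h1 u (w ∘ ι₂))).det := by
  classical
  set τ : Equiv.Perm (Fin (k - 1)) :=
    (Equiv.ofInjective ι₁ hinj1).trans ((Equiv.setCongr hr).trans
      (Equiv.ofInjective ι₂ hinj2).symm) with hτ
  have key : ∀ j, ι₂ (τ j) = ι₁ j := by
    intro j
    show ι₂ ((Equiv.ofInjective ι₂ hinj2).symm
      ((Equiv.setCongr hr) (Equiv.ofInjective ι₁ hinj1 j))) = ι₁ j
    rw [Equiv.apply_ofInjective_symm hinj2]
    rfl
  set σ₀ : Equiv.Perm (Fin (k - 1 + 1)) := Equiv.Perm.decomposeFin.symm (0, τ) with hσ₀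
  set σ : Equiv.Perm (Fin k) := ((finCongr h1.symm).trans σ₀).trans (finCongr h1) with hσ
  refine ⟨Equiv.Perm.sign σ, fun w u => ?_⟩
  have hM : Matrix.of (rtup h1 u (w ∘ ι₁)) =
      (Matrix.of (rtup h1 u (w ∘ ι₂))).submatrix σ id := by
    funext i j
    simp only [Matrix.submatrix_apply, id_eq, Matrix.of_apply]
    have hrow : rtup h1 u (w ∘ ι₁) i = rtup h1 u (w ∘ ι₂) (σ i) := by
      rw [rtup, rtup, comp_apply, comp_apply]
      have hcast : Fin.cast h1.symm (σ i) = σ₀ (Fin.cast h1.symm i) := by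
        ext
        simp [hσ, finCongr_apply]
      rw [hcast]
      generalize Fin.cast h1.symm i = i'
      induction i' using Fin.cases with
      | zero => simp [hσ₀]
      | succ j' =>
        simp [hσ₀, Equiv.Perm.decomposeFin_symm_apply_succ, Equiv.swap_self, key j']
    rw [hrow]
  rw [hM, Matrix.det_permute σ]

end Det

section Arc

variable {k M : ℕ} (gS : Fin M ↪ (Fin k → F))

lemma arc_det_ne_zero (hS : IsArc (Set.range gS)) (κ : Fin k → Fin M) (hκ : Injective κ) :
    (Matrix.of (fun i => gS (κ i))).det ≠ 0 := by
  classical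
  have hinj : Injective (fun i => gS (κ i)) := gS.injective.comp hκ
  set T : Finset (Fin k → F) := Finset.image (fun i => gS (κ i)) univ with hT
  have hT1 : ↑T ⊆ Set.range gS := by
    intro x hx
    simp only [hT, coe_image, Set.mem_image] at hx
    obtain ⟨i, _, rfl⟩ := hx
    exact ⟨κ i, rfl⟩
  have hT2 : T.card = k := by
    rw [hT, Finset.card_image_of_injective _ hinj, card_univ, Fintype.card_fin]
  have hli := hS T hT1 hT2
  have hli2 : LinearIndependent F (fun i : Fin k => gS (κ i)) := by
    have he : ∀ i, gS (κ i) ∈ T := fun i => Finset.mem_image_of_mem _ (mem_univ i)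
    exact hli.comp (fun i : Fin k => (⟨gS (κ i), he i⟩ : {x // x ∈ T}))
      (fun i j h => hinj (by simpa using congrArg Subtype.val h))
  have hunit : IsUnit (Matrix.of fun i => gS (κ i)) :=
    Matrix.linearIndependent_rows_iff_isUnit.mp hli2
  exact ((Matrix.isUnit_iff_isUnit_det _).mp hunit).ne_zero

lemma linform_vanish (hS : IsArc (Set.range gS)) (ℓ : (Fin k → F) →ₗ[F] F)
    (κ : Fin k → Fin M) (hκ : Injective κ) (h0 : ∀ j, ℓ (gS (κ j)) = 0) :
    ∀ X, ℓ X = 0 := by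
  classical
  set m : Fin k → F := fun i => ℓ (fun j => if i = j then 1 else 0) with hm
  have hrep : ∀ X : Fin k → F, ℓ X = ∑ i, X i * m i := by
    intro X
    conv_lhs => rw [pi_eq_sum_univ X]
    rw [map_sum]
    apply Finset.sum_congr rfl
    intro i _
    rw [map_smul, smul_eq_mul]
  have hmv : (Matrix.of (fun i j => gS (κ i) j)).mulVec m = 0 := by
    funext i
    show ∑ j, gS (κ i) j * m j = 0
    rw [← hrep (gS (κ i))]
    exact h0 i
  have hdet : (Matrix.of (fun i j => gS (κ i) j)).det ≠ 0 := arc_det_ne_zero gS hS κ hκ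
  have hm0 : m = 0 := Matrix.eq_zero_of_mulVec_eq_zero hdet hmv
  intro X
  rw [hrep, hm0]
  simp

end Arc

section ProdFin

lemma prod_eq_fin {ι' : Type*} [LinearOrder ι'] (s : Finset ι') {n : ℕ} (h : s.card = n)
    (f : ι' → F) : ∏ x ∈ s, f x = ∏ i : Fin n, f (s.orderEmbOfFin h i) := by
  symm
  apply Finset.prod_bij (fun (i : Fin n) (_ : i ∈ univ) => s.orderEmbOfFin h i)
  · intro i _
    exact Finset.orderEmbOfFin_mem s h i
  · intro i _ j _ hij
    exact (s.orderEmbOfFin h).injective hij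
  · intro b hb
    have hb' : b ∈ Set.range (s.orderEmbOfFin h) := by
      rw [Finset.range_orderEmbOfFin]
      exact hb
    obtain ⟨i, hi⟩ := hb'
    exact ⟨i, mem_univ i, hi⟩
  · intro i _
    rfl

lemma orderEmbOfFin_cast {α : Type*} [LinearOrder α] (C : Finset α) {m : ℕ}
    (h : C.card = m) (j : Fin m) :
    C.orderEmbOfFin h j = C.orderEmbOfFin rfl (Fin.cast h.symm j) := by
  have hu := Finset.orderEmbOfFin_unique h
    (f := fun j : Fin m => C.orderEmbOfFin rfl (Fin.cast h.symm j)) ?_ ?_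
  · exact (congrFun hu j).symm
  · intro x
    exact Finset.orderEmbOfFin_mem C rfl _
  · intro a b hab
    exact (C.orderEmbOfFin rfl).strictMono hab

end ProdFin


section Helpers

variable {k M : ℕ} {α : Type*}

lemma fin_cases01' {n : ℕ} (h : n + 1 = k) (i : Fin k) :
    i = ⟨0, by omega⟩ ∨ ∃ j : Fin n, i = ⟨(j : ℕ) + 1, by omega⟩ := by
  rcases i with ⟨iv, hiv⟩
  rcases iv with _ | j
  · left; rfl
  · right; exact ⟨⟨j, by omega⟩, rfl⟩

lemma cons_cast_val0' {n : ℕ} (h : n + 1 = k) (u : α) (v : Fin n → α) (hk0 : 0 < k) :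
    (Fin.cons (α := fun _ => α) u v) (Fin.cast h.symm ⟨0, hk0⟩) = u := by
  have hh : Fin.cast h.symm (⟨0, hk0⟩ : Fin k) = 0 := rfl
  rw [hh, Fin.cons_zero]

lemma cons_cast_val_succ' {n : ℕ} (h : n + 1 = k) (u : α) (v : Fin n → α) (j : Fin n) :
    (Fin.cons (α := fun _ => α) u v) (Fin.cast h.symm ⟨(j : ℕ) + 1, by omega⟩) = v j := by
  have hh : Fin.cast h.symm (⟨(j : ℕ) + 1, by omega⟩ : Fin k) = Fin.succ j := rfl
  rw [hh, Fin.cons_succ]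

lemma rtup_comp {β : Type*} (h1 : k - 1 + 1 = k) (f : α → β) (u : α) (vv : Fin (k - 1) → α) :
    f ∘ rtup h1 u vv = rtup h1 (f u) (f ∘ vv) := by
  funext i
  rcases fin_cases01' h1 i with rfl | ⟨j, rfl⟩
  · rw [Function.comp_apply, rtup_val0, rtup_val0]
  · rw [Function.comp_apply, rtup_val_succ, rtup_val_succ, Function.comp_apply]

lemma cc_val0 (h2 : k - 1 = k - 2 + 1) (e : α) (vv : Fin (k - 2) → α) (hpos : 0 < k - 1) :
    ((Fin.cons e vv) ∘ Fin.cast h2) ⟨0, hpos⟩ = e := by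
  simp only [Function.comp_apply]
  have h : Fin.cast h2 (⟨0, hpos⟩ : Fin (k - 1)) = 0 := rfl
  rw [h, Fin.cons_zero]

lemma cc_val_succ (h2 : k - 1 = k - 2 + 1) (e : α) (vv : Fin (k - 2) → α) (j0 : Fin (k - 2)) :
    ((Fin.cons e vv) ∘ Fin.cast h2) ⟨(j0 : ℕ) + 1, by omega⟩ = vv j0 := by
  simp only [Function.comp_apply]
  have h : Fin.cast h2 (⟨(j0 : ℕ) + 1, by omega⟩ : Fin (k - 1)) = Fin.succ j0 := rfl
  rw [h, Fin.cons_succ]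

lemma units_pow_even {F : Type*} [Field F] (ε : ℤˣ) (t : ℕ) :
    (((ε : ℤ) : F)) ^ (2 * t) = 1 := by
  rcases Int.units_eq_one_or ε with h | h <;> simp [h, pow_mul, neg_one_sq]

lemma sq_sign_mul {F : Type*} [Field F] (m : ℕ) (x y : F) :
    ((-1 : F) ^ m * x * y) ^ 2 = x ^ 2 * y ^ 2 := by
  have h : ((-1 : F) ^ m) ^ 2 = 1 := by
    rw [← pow_mul, mul_comm m 2, pow_mul]
    norm_num
  calc ((-1 : F) ^ m * x * y) ^ 2 = ((-1 : F) ^ m) ^ 2 * (x ^ 2 * y ^ 2) := by ring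
  _ = x ^ 2 * y ^ 2 := by rw [h]; ring

/-- "fold" map `Fin (2t) → Fin t`. -/
def fmap {t : ℕ} (i : Fin (2 * t)) : Fin t :=
  ⟨(i : ℕ) % t, by
    rcases Nat.eq_zero_or_pos t with h | h
    · have := i.isLt; omega
    · exact Nat.mod_lt _ h⟩

lemma fmap_prod {F : Type*} [Field F] (t : ℕ) (L : Fin t → F) :
    ∏ i : Fin (2 * t), L (fmap i) = (∏ i : Fin t, L i) ^ 2 := by
  have h2t : 2 * t = t + t := by omega
  have hstep : ∏ i : Fin (2 * t), L (fmap i)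
      = ∏ i' : Fin (t + t), L (fmap (Fin.cast h2t.symm i')) := by
    apply Fintype.prod_equiv (finCongr h2t)
    intro x
    apply congrArg (fun y => L (fmap y))
    ext
    simp
  rw [hstep, Fin.prod_univ_add]
  have hl : ∀ i : Fin t, L (fmap (Fin.cast h2t.symm (Fin.castAdd t i))) = L i := by
    intro i
    apply congrArg L
    ext
    show ((Fin.castAdd t i : Fin (t + t)) : ℕ) % t = (i : ℕ)
    simp [Nat.mod_eq_of_lt i.isLt]
  have hr : ∀ i : Fin t, L (fmap (Fin.cast h2t.symm (Fin.natAdd t i))) = L i := by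
    intro i
    apply congrArg L
    ext
    show ((Fin.natAdd t i : Fin (t + t)) : ℕ) % t = (i : ℕ)
    simp [Nat.add_mod_left, Nat.mod_eq_of_lt i.isLt]
  rw [Finset.prod_congr rfl (fun i _ => hl i), Finset.prod_congr rfl (fun i _ => hr i), sq]

end Helpers

section DetBridge

variable {F : Type*} [Field F] {k M : ℕ}

lemma detRows_eq_ctup (h1 : k - 1 + 1 = k) (h2 : k - 1 = k - 2 + 1) (z X : Fin k → F)
    (w : Fin (k - 2) → Fin k → F) :
    detRows z ((Fin.cons X w) ∘ Fin.cast h2) = (Matrix.of (ctup h1 h2 z X w)).det := by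
  rw [detRows, dif_pos h1]
  rfl

lemma detWith_eq (h1 : k - 1 + 1 = k) (g : Fin M → Fin k → F) {C : Finset (Fin M)}
    (hC : C.card = k - 1) (u : Fin k → F) :
    detWith g u C = (Matrix.of (rtup h1 u (g ∘ ⇑(C.orderEmbOfFin hC)))).det := by
  have hck : C.card + 1 = k := by omega
  rw [detWith, dif_pos hck]
  congr 1
  funext i
  show (Fin.cons (α := fun _ => Fin k → F) u (fun j => g (C.orderEmbOfFin rfl j)))
      (Fin.cast hck.symm i) = rtup h1 u (g ∘ ⇑(C.orderEmbOfFin hC)) i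
  rcases fin_cases01' h1 i with rfl | ⟨j, rfl⟩
  · rw [cons_cast_val0' hck _ _ (by omega), rtup_val0]
  · have hjlt : (j : ℕ) < C.card := by omega
    rw [rtup_val_succ]
    have h3 : (⟨(j : ℕ) + 1, by omega⟩ : Fin k)
        = ⟨((⟨(j : ℕ), hjlt⟩ : Fin C.card) : ℕ) + 1, by omega⟩ := rfl
    rw [h3, cons_cast_val_succ' hck]
    simp only [Function.comp_apply]
    apply congrArg g
    rw [orderEmbOfFin_cast C hC j]
    rfl

end DetBridge


section MainLemmas

variable {k M t : ℕ}

lemma bf_step (hk : 3 ≤ k)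
    (gS : Fin M ↪ (Fin k → F)) (hS : IsArc (Set.range ⇑gS)) (hMk : k ≤ M)
    (f : Finset (Fin M) → (Fin k → F) → F)
    (hf : ∀ A : Finset (Fin M), A.card = k - 2 →
      IsTangentPoly t (Set.range ⇑gS) (⇑gS '' ↑A) (f A))
    (a c : Finset (Fin M) → F)
    (E : Finset (Fin M)) (hE : E.card = k + 2 * t - 1)
    (A : Finset (Fin M)) (hA : A.card = k - 2)
    (hnode : ∀ e ∈ E \ A,
      phiPoly 2 (⇑gS) c E ((Fin.cons (gS e) fun j => gS (A.orderEmbOfFin hA j)) ∘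
        Fin.cast (show k - 1 = k - 2 + 1 by omega)) = (a A) ^ 2 * (f A (gS e)) ^ 2)
    (X : Fin k → F) :
    phiPoly 2 (⇑gS) c E ((Fin.cons X fun j => gS (A.orderEmbOfFin hA j)) ∘
      Fin.cast (show k - 1 = k - 2 + 1 by omega)) = (a A) ^ 2 * (f A X) ^ 2 := by
  classical
  have h1 : k - 1 + 1 = k := by omega
  have h2 : k - 1 = k - 2 + 1 := by omega
  have hk1 : (1 : ℕ) < k := by omega
  set embA := A.orderEmbOfFin hA with hembA
  set W : Fin (k - 2) → Fin k → F := ⇑gS ∘ ⇑embA with hW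
  have hYw : ∀ X : Fin k → F,
      ((Fin.cons X fun j => gS (A.orderEmbOfFin hA j)) ∘
        Fin.cast (show k - 1 = k - 2 + 1 by omega)) = ((Fin.cons X W) ∘ Fin.cast h2) :=
    fun _ => rfl
  rw [hYw X]
  have hembAinj : Function.Injective ⇑embA := embA.injective
  have hrangeA : Set.range ⇑embA = ↑A := Finset.range_orderEmbOfFin A hA
  have hmemA : ∀ j, embA j ∈ A := fun j => Finset.orderEmbOfFin_mem A hA j
  have hι : ∀ e : Fin M, e ∉ A →
      Function.Injective ((Fin.cons e ⇑embA) ∘ Fin.cast h2) := by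
    intro e he
    apply cons_cast_injective h2 hembAinj
    rw [hrangeA]
    exact fun hmem => he hmem
  have hκinj : ∀ z e : Fin M, z ≠ e → z ∉ A → e ∉ A →
      Function.Injective (rtup h1 z ((Fin.cons e ⇑embA) ∘ Fin.cast h2)) := by
    intro z e hz hzA heA
    apply rtup_injective h1 (hι e heA)
    rw [cons_cast_range h2, hrangeA]
    rintro (h | h)
    · exact hz h
    · exact hzA h
  have hctupg : ∀ z e : Fin M, Matrix.of (ctup h1 h2 (gS z) (gS e) W)
      = Matrix.of (fun i => gS (rtup h1 z ((Fin.cons e ⇑embA) ∘ Fin.cast h2) i)) := by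
    intro z e
    have h' : ctup h1 h2 (gS z) (gS e) W
        = ⇑gS ∘ rtup h1 z ((Fin.cons e ⇑embA) ∘ Fin.cast h2) := by
      rw [hW, ctup_eq_rtup_comp h1 h2 (⇑gS) (gS z) e ⇑embA, rtup_comp]
    rw [h']
    rfl
  have hdetg : ∀ z e : Fin M, z ≠ e → z ∉ A → e ∉ A →
      (Matrix.of (ctup h1 h2 (gS z) (gS e) W)).det ≠ 0 := by
    intro z e hz hzA heA
    rw [hctupg z e]
    exact arc_det_ne_zero gS hS _ (hκinj z e hz hzA heA)
  have hzcard : 1 < (univ \ A).card := by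
    rw [Finset.card_sdiff_of_subset (Finset.subset_univ A), Finset.card_univ, Fintype.card_fin, hA]
    omega
  obtain ⟨z0, hz0m, z1, hz1m, hz01⟩ := Finset.one_lt_card.mp hzcard
  have hz0A : z0 ∉ A := (Finset.mem_sdiff.mp hz0m).2
  have hz1A : z1 ∉ A := (Finset.mem_sdiff.mp hz1m).2
  set β₁ := lform h1 h2 hk1 (gS z0) W with hβ₁def
  set β₂ := lform h1 h2 hk1 (gS z1) W with hβ₂def
  have hβ₁0 : β₁ (gS z0) = 0 := by
    rw [hβ₁def, lform_apply]
    exact det_ctup_zero_row01 h1 h2 hk1 rfl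
  have hβ₂0 : β₂ (gS z1) = 0 := by
    rw [hβ₂def, lform_apply]
    exact det_ctup_zero_row01 h1 h2 hk1 rfl
  have hβ₁1 : β₁ (gS z1) ≠ 0 := by
    rw [hβ₁def, lform_apply]
    exact hdetg z0 z1 hz01 hz0A hz1A
  have hβ₂1 : β₂ (gS z0) ≠ 0 := by
    rw [hβ₂def, lform_apply]
    exact hdetg z1 z0 (Ne.symm hz01) hz1A hz0A
  have hβ₁w : ∀ j, β₁ (W j) = 0 := fun j => by
    rw [hβ₁def, lform_apply]
    exact det_ctup_zero_row1w h1 h2 hk1 j rfl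
  have hβ₂w : ∀ j, β₂ (W j) = 0 := fun j => by
    rw [hβ₂def, lform_apply]
    exact det_ctup_zero_row1w h1 h2 hk1 j rfl
  have hrep : ∀ ℓ : (Fin k → F) →ₗ[F] F, (∀ j, ℓ (W j) = 0) →
      ∃ pi qi : F, ∀ X, ℓ X = pi * β₁ X + qi * β₂ X := by
    intro ℓ hv
    refine ⟨ℓ (gS z1) / β₁ (gS z1), ℓ (gS z0) / β₂ (gS z0), ?_⟩
    set μ : (Fin k → F) →ₗ[F] F :=
      ℓ - (ℓ (gS z1) / β₁ (gS z1)) • β₁ - (ℓ (gS z0) / β₂ (gS z0)) • β₂ with hμdef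
    have hμap : ∀ X, μ X = ℓ X - (ℓ (gS z1) / β₁ (gS z1)) * β₁ X
        - (ℓ (gS z0) / β₂ (gS z0)) * β₂ X := by
      intro X
      simp [hμdef, LinearMap.sub_apply, LinearMap.smul_apply, smul_eq_mul]
    have hμ0 : ∀ X, μ X = 0 := by
      apply linform_vanish gS hS μ (rtup h1 z0 ((Fin.cons z1 ⇑embA) ∘ Fin.cast h2))
        (hκinj z0 z1 hz01 hz0A hz1A)
      intro j
      rcases fin_cases01' h1 j with rfl | ⟨j', rfl⟩
      · rw [rtup_val0, hμap, hβ₁0]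
        field_simp
        ring
      · rw [rtup_val_succ]
        rcases fin_cases01' h2.symm j' with rfl | ⟨j0, rfl⟩
        · rw [cc_val0 h2 _ _ (by omega), hμap, hβ₂0]
          field_simp
          ring
        · rw [cc_val_succ h2 _ _ j0, hμap]
          have hWj : gS (embA j0) = W j0 := rfl
          rw [hWj, hv j0, hβ₁w j0, hβ₂w j0]
          ring
    intro X
    have h := hμ0 X
    rw [hμap X] at h
    linear_combination h
  have hpq' : ∀ z : Fin M, ∃ pi qi : F, ∀ X,
      detRows (gS z) ((Fin.cons X W) ∘ Fin.cast h2) = pi * β₁ X + qi * β₂ X := by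
    intro z
    have hv : ∀ j, (lform h1 h2 hk1 (gS z) W) (W j) = 0 := fun j => by
      rw [lform_apply]
      exact det_ctup_zero_row1w h1 h2 hk1 j rfl
    obtain ⟨pi, qi, hpq⟩ := hrep _ hv
    exact ⟨pi, qi, fun X => by
      rw [detRows_eq_ctup h1 h2, ← lform_apply h1 h2 hk1]
      exact hpq X⟩
  choose p q hpq using hpq'
  obtain ⟨α, hαpair, hαker, hαprod⟩ := hf A hA
  have hαvan : ∀ i j, α i (W j) = 0 := by
    intro i j
    have hmem : W j ∈ ⇑gS '' ↑A := ⟨embA j, Finset.mem_coe.mpr (hmemA j), rfl⟩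
    rw [← hαker i] at hmem
    exact hmem.2
  choose pα qα hpα using fun i => hrep (α i) (hαvan i)
  set P₁ : F → F → F := fun s u => ∑ C ∈ E.powersetCard (k - 1), (c C) ^ 2 *
    ∏ z ∈ E \ C, (p z / detWith (⇑gS) (gS z) C * s + q z / detWith (⇑gS) (gS z) C * u)
    with hP₁def
  set P₂ : F → F → F := fun s u => (a A) ^ 2 * (∏ i : Fin t, (pα i * s + qα i * u)) ^ 2
    with hP₂def
  have hP₁app : ∀ s u, P₁ s u = ∑ C ∈ E.powersetCard (k - 1), (c C) ^ 2 *
      ∏ z ∈ E \ C, (p z / detWith (⇑gS) (gS z) C * s + q z / detWith (⇑gS) (gS z) C * u) :=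
    fun _ _ => rfl
  have hP₂app : ∀ s u, P₂ s u = (a A) ^ 2 * (∏ i : Fin t, (pα i * s + qα i * u)) ^ 2 :=
    fun _ _ => rfl
  have hψ : ∀ X : Fin k → F,
      phiPoly 2 (⇑gS) c E ((Fin.cons X W) ∘ Fin.cast h2) = P₁ (β₁ X) (β₂ X) := by
    intro X
    rw [phiPoly, hP₁app]
    apply Finset.sum_congr rfl
    intro C _
    congr 1
    apply Finset.prod_congr rfl
    intro z _
    rw [hpq z X, add_div, mul_div_right_comm, mul_div_right_comm]
  have hrhs : ∀ X : Fin k → F, (a A) ^ 2 * (f A X) ^ 2 = P₂ (β₁ X) (β₂ X) := by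
    intro X
    rw [hP₂app, hαprod X]
    congr 2
    apply Finset.prod_congr rfl
    intro i _
    exact hpα i X
  have hBF₁ : IsBF (2 * t) P₁ := by
    refine ⟨Finset (Fin M), E.powersetCard (k - 1), fun C => (c C) ^ 2,
      fun C i => if hc : (E \ C).card = 2 * t then
        p ((E \ C).orderEmbOfFin hc i) / detWith (⇑gS) (gS ((E \ C).orderEmbOfFin hc i)) C
      else 0,
      fun C i => if hc : (E \ C).card = 2 * t then
        q ((E \ C).orderEmbOfFin hc i) / detWith (⇑gS) (gS ((E \ C).orderEmbOfFin hc i)) C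
      else 0, ?_⟩
    intro s u
    rw [hP₁app]
    apply Finset.sum_congr rfl
    intro C hC
    have hc : (E \ C).card = 2 * t := by
      rw [Finset.card_sdiff_of_subset (Finset.mem_powersetCard.mp hC).1, hE,
        (Finset.mem_powersetCard.mp hC).2]
      omega
    rw [prod_eq_fin (E \ C) hc]
    congr 1
    apply Finset.prod_congr rfl
    intro i _
    beta_reduce
    rw [dif_pos hc, dif_pos hc]
  have hBF₂ : IsBF (2 * t) P₂ := by
    refine ⟨Unit, {Unit.unit}, fun _ => (a A) ^ 2,
      fun _ i => pα (fmap i), fun _ i => qα (fmap i), ?_⟩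
    intro s u
    rw [hP₂app, Finset.sum_singleton]
    congr 1
    exact (fmap_prod t fun i => pα i * s + qα i * u).symm
  have hEA : 2 * t + 1 ≤ (E \ A).card := by
    have h := Finset.le_card_sdiff A E
    rw [hE, hA] at h
    omega
  obtain ⟨D, hDsub, hDcard⟩ := Finset.exists_subset_card_eq hEA
  set emD := D.orderEmbOfFin hDcard with hemDdef
  have hDmem : ∀ i : Fin (2 * t + 1), emD i ∈ E \ A :=
    fun i => hDsub (Finset.orderEmbOfFin_mem D hDcard i)
  have hDA : ∀ i, emD i ∉ A := fun i => (Finset.mem_sdiff.mp (hDmem i)).2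
  set v : Fin (2 * t + 1) → F × F := fun i => (β₁ (gS (emD i)), β₂ (gS (emD i))) with hvdef
  have hv0 : ∀ i, v i ≠ 0 := by
    intro i h0
    have hs0 : β₁ (gS (emD i)) = 0 := congrArg Prod.fst h0
    have hu0 : β₂ (gS (emD i)) = 0 := congrArg Prod.snd h0
    have hwc : 0 < (univ \ insert (emD i) A).card := by
      rw [Finset.card_sdiff_of_subset (Finset.subset_univ _), Finset.card_univ, Fintype.card_fin,
        Finset.card_insert_of_notMem (hDA i), hA]
      omega
    obtain ⟨w'', hw''m⟩ := Finset.card_pos.mp hwc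
    have hw'' := Finset.mem_sdiff.mp hw''m
    have hw''e : w'' ≠ emD i := fun h => hw''.2 (by rw [h]; exact Finset.mem_insert_self _ _)
    have hw''A : w'' ∉ A := fun h => hw''.2 (Finset.mem_insert_of_mem h)
    have hδvan : ∀ j, (lform h1 h2 hk1 (gS w'') W) (W j) = 0 := fun j => by
      rw [lform_apply]
      exact det_ctup_zero_row1w h1 h2 hk1 j rfl
    obtain ⟨pδ, qδ, hδ⟩ := hrep _ hδvan
    have hd := hδ (gS (emD i))
    rw [hs0, hu0, mul_zero, mul_zero, add_zero, lform_apply] at hd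
    exact hdetg w'' (emD i) hw''e hw''A (hDA i) hd
  have hvp : ∀ i i', i ≠ i' → (v i).1 * (v i').2 ≠ (v i').1 * (v i).2 := by
    intro i i' hne heq
    have hee' : emD i ≠ emD i' := fun h => hne (emD.injective h)
    set γ : (Fin k → F) →ₗ[F] F := β₂ (gS (emD i')) • β₁ - β₁ (gS (emD i')) • β₂ with hγdef
    have hγap : ∀ X, γ X = β₂ (gS (emD i')) * β₁ X - β₁ (gS (emD i')) * β₂ X := by
      intro X
      simp [hγdef, LinearMap.sub_apply, LinearMap.smul_apply, smul_eq_mul]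
    have hγ0 : ∀ X, γ X = 0 := by
      apply linform_vanish gS hS γ (rtup h1 (emD i) ((Fin.cons (emD i') ⇑embA) ∘ Fin.cast h2))
        (hκinj _ _ hee' (hDA i) (hDA i'))
      intro j
      rcases fin_cases01' h1 j with rfl | ⟨j', rfl⟩
      · rw [rtup_val0, hγap]
        simp only [hvdef] at heq
        linear_combination heq
      · rw [rtup_val_succ]
        rcases fin_cases01' h2.symm j' with rfl | ⟨j0, rfl⟩
        · rw [cc_val0 h2 _ _ (by omega), hγap]
          ring
        · rw [cc_val_succ h2 _ _ j0, hγap]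
          have hWj : gS (embA j0) = W j0 := rfl
          rw [hWj, hβ₁w j0, hβ₂w j0]
          ring
    by_cases hu' : β₂ (gS (emD i')) = 0
    · have hs' : β₁ (gS (emD i')) ≠ 0 := by
        intro h
        exact hv0 i' (Prod.ext h hu')
      have h := hγ0 (gS z0)
      rw [hγap, hu', hβ₁0] at h
      exact (mul_ne_zero hs' hβ₂1) (by linear_combination -h)
    · have h := hγ0 (gS z1)
      rw [hγap, hβ₂0] at h
      exact (mul_ne_zero hu' hβ₁1) (by linear_combination h)
  have hagree : ∀ i : Fin (2 * t + 1), P₁ (v i).1 (v i).2 = P₂ (v i).1 (v i).2 := by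
    intro i
    have h := hnode (emD i) (hDmem i)
    rw [hYw (gS (emD i))] at h
    calc P₁ (v i).1 (v i).2
        = phiPoly 2 (⇑gS) c E ((Fin.cons (gS (emD i)) W) ∘ Fin.cast h2) :=
          (hψ (gS (emD i))).symm
    _ = (a A) ^ 2 * (f A (gS (emD i))) ^ 2 := h
    _ = P₂ (v i).1 (v i).2 := hrhs (gS (emD i))
  have hext := BF_ext hBF₁ hBF₂ v hv0 hvp hagree
  calc phiPoly 2 (⇑gS) c E ((Fin.cons X W) ∘ Fin.cast h2) = P₁ (β₁ X) (β₂ X) := hψ X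
  _ = P₂ (β₁ X) (β₂ X) := hext _ _
  _ = (a A) ^ 2 * (f A X) ^ 2 := (hrhs X).symm

lemma key (hk : 3 ≤ k)
    (gS : Fin M ↪ (Fin k → F)) (hS : IsArc (Set.range ⇑gS)) (hMk : k ≤ M)
    (f : Finset (Fin M) → (Fin k → F) → F)
    (hf : ∀ A : Finset (Fin M), A.card = k - 2 →
      IsTangentPoly t (Set.range ⇑gS) (⇑gS '' ↑A) (f A))
    (a c : Finset (Fin M) → F)
    (hcomp : CompatibleFamilies t (⇑gS) f a c)
    (E : Finset (Fin M)) (hE : E.card = k + 2 * t - 1) :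
    ∀ (n : ℕ) (A : Finset (Fin M)) (hA : A.card = k - 2), (A \ E).card = n →
      ∀ X : Fin k → F,
        phiPoly 2 (⇑gS) c E ((Fin.cons X fun j => gS (A.orderEmbOfFin hA j)) ∘
          Fin.cast (show k - 1 = k - 2 + 1 by omega)) = (a A) ^ 2 * (f A X) ^ 2 := by
  classical
  have h1 : k - 1 + 1 = k := by omega
  have h2 : k - 1 = k - 2 + 1 := by omega
  have hk1 : (1 : ℕ) < k := by omega
  intro n
  induction n with
  | zero =>
    intro A hA hAE X
    refine bf_step hk gS hS hMk f hf a c E hE A hA ?_ X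
    intro e he
    have hAsub : A ⊆ E := by
      rw [← Finset.sdiff_eq_empty_iff_subset]
      exact Finset.card_eq_zero.mp hAE
    have heE : e ∈ E := (Finset.mem_sdiff.mp he).1
    have heA : e ∉ A := (Finset.mem_sdiff.mp he).2
    set embA := A.orderEmbOfFin hA with hembA
    set W : Fin (k - 2) → Fin k → F := ⇑gS ∘ ⇑embA with hW
    have hYw : ((Fin.cons (gS e) fun j => gS (A.orderEmbOfFin hA j)) ∘
        Fin.cast (show k - 1 = k - 2 + 1 by omega)) = ((Fin.cons (gS e) W) ∘ Fin.cast h2) :=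
      rfl
    rw [hYw]
    set C₀ : Finset (Fin M) := insert e A with hC₀def
    have hC₀card : C₀.card = k - 1 := by
      rw [hC₀def, Finset.card_insert_of_notMem heA, hA]
      omega
    have hC₀sub : C₀ ⊆ E := Finset.insert_subset heE hAsub
    have hC₀mem : C₀ ∈ E.powersetCard (k - 1) :=
      Finset.mem_powersetCard.mpr ⟨hC₀sub, hC₀card⟩
    have hι₁inj : Function.Injective ((Fin.cons e ⇑embA) ∘ Fin.cast h2) :=
      cons_cast_injective h2 embA.injective
        (by rw [Finset.range_orderEmbOfFin]; exact fun hm => heA hm)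
    have hι₂inj : Function.Injective ⇑(C₀.orderEmbOfFin hC₀card) :=
      (C₀.orderEmbOfFin hC₀card).injective
    have hrange : Set.range ((Fin.cons e ⇑embA) ∘ Fin.cast h2)
        = Set.range ⇑(C₀.orderEmbOfFin hC₀card) := by
      rw [cons_cast_range h2, Finset.range_orderEmbOfFin, Finset.range_orderEmbOfFin,
        hC₀def, Finset.coe_insert, Set.insert_eq]
    obtain ⟨ε, hε⟩ := det_reindex (F := F) h1 _ _ hι₁inj hι₂inj hrange
    have hfac : ∀ z ∈ E \ C₀,
        detRows (gS z) ((Fin.cons (gS e) W) ∘ Fin.cast h2)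
          = ((ε : ℤ) : F) * detWith (⇑gS) (gS z) C₀ := by
      intro z _
      rw [detRows_eq_ctup h1 h2, hW, ctup_eq_rtup_comp h1 h2 (⇑gS) (gS z) e ⇑embA,
        hε (⇑gS) (gS z), detWith_eq h1 (⇑gS) hC₀card]
    have hdw : ∀ z ∈ E \ C₀, detWith (⇑gS) (gS z) C₀ ≠ 0 := by
      intro z hz
      rw [detWith_eq h1 (⇑gS) hC₀card]
      have hzC : z ∉ C₀ := (Finset.mem_sdiff.mp hz).2
      have hκ : Function.Injective (rtup h1 z ⇑(C₀.orderEmbOfFin hC₀card)) :=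
        rtup_injective h1 hι₂inj
          (by rw [Finset.range_orderEmbOfFin]; exact fun hm => hzC hm)
      have hof : Matrix.of (rtup h1 (gS z) (⇑gS ∘ ⇑(C₀.orderEmbOfFin hC₀card)))
          = Matrix.of (fun i => gS (rtup h1 z ⇑(C₀.orderEmbOfFin hC₀card) i)) := by
        rw [← rtup_comp h1 (⇑gS) z ⇑(C₀.orderEmbOfFin hC₀card)]
        rfl
      rw [hof]
      exact arc_det_ne_zero gS hS _ hκ
    have hside : ∀ C ∈ E.powersetCard (k - 1), C ≠ C₀ →
        (c C) ^ 2 * ∏ z ∈ E \ C,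
          detRows (gS z) ((Fin.cons (gS e) W) ∘ Fin.cast h2) / detWith (⇑gS) (gS z) C = 0 := by
      intro C hC hne
      obtain ⟨hCE, hCcard⟩ := Finset.mem_powersetCard.mp hC
      have hnsub : ¬ C₀ ⊆ C := by
        intro hsub
        exact hne (Finset.eq_of_subset_of_card_le hsub (by rw [hC₀card, hCcard])).symm
      obtain ⟨x, hxC₀, hxC⟩ := Finset.not_subset.mp hnsub
      have hxE : x ∈ E \ C := Finset.mem_sdiff.mpr ⟨hC₀sub hxC₀, hxC⟩
      have hnum : detRows (gS x) ((Fin.cons (gS e) W) ∘ Fin.cast h2) = 0 := by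
        rw [detRows_eq_ctup h1 h2]
        rcases Finset.mem_insert.mp (by rwa [hC₀def] at hxC₀) with rfl | hxA
        · exact det_ctup_zero_row01 h1 h2 hk1 rfl
        · obtain ⟨j, hj⟩ : ∃ j, embA j = x := by
            have hx' : x ∈ Set.range ⇑embA := by
              rw [Finset.range_orderEmbOfFin]
              exact hxA
            exact hx'
          exact det_ctup_zero_row0w h1 h2 j (by rw [hW, ← hj]; rfl)
      apply mul_eq_zero_of_right
      exact Finset.prod_eq_zero hxE (by rw [hnum, zero_div])
    have hnotin : C₀ ∉ E.powersetCard (k - 1) →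
        (c C₀) ^ 2 * ∏ z ∈ E \ C₀,
          detRows (gS z) ((Fin.cons (gS e) W) ∘ Fin.cast h2) / detWith (⇑gS) (gS z) C₀ = 0 :=
      fun h => absurd hC₀mem h
    rw [phiPoly, Finset.sum_eq_single C₀ hside hnotin]
    have hc2t : (E \ C₀).card = 2 * t := by
      rw [Finset.card_sdiff_of_subset hC₀sub, hE, hC₀card]
      omega
    have hprod : (∏ z ∈ E \ C₀,
        detRows (gS z) ((Fin.cons (gS e) W) ∘ Fin.cast h2) / detWith (⇑gS) (gS z) C₀) = 1 := by
      calc (∏ z ∈ E \ C₀,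
          detRows (gS z) ((Fin.cons (gS e) W) ∘ Fin.cast h2) / detWith (⇑gS) (gS z) C₀)
          = ∏ _z ∈ E \ C₀, ((ε : ℤ) : F) := by
            apply Finset.prod_congr rfl
            intro z hz
            rw [hfac z hz, mul_div_assoc, div_self (hdw z hz), mul_one]
      _ = ((ε : ℤ) : F) ^ (E \ C₀).card := Finset.prod_const _
      _ = 1 := by rw [hc2t]; exact units_pow_even ε t
    rw [hprod, mul_one, hC₀def, hcomp.2.2 A hA e heA, sq_sign_mul]
  | succ m IH =>
    intro A hA hAE X
    refine bf_step hk gS hS hMk f hf a c E hE A hA ?_ X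
    intro e he
    have heE : e ∈ E := (Finset.mem_sdiff.mp he).1
    have heA : e ∉ A := (Finset.mem_sdiff.mp he).2
    have hAEpos : (A \ E).Nonempty := by
      rw [← Finset.card_pos, hAE]
      omega
    obtain ⟨a0, ha0⟩ := hAEpos
    have ha0A : a0 ∈ A := (Finset.mem_sdiff.mp ha0).1
    have ha0E : a0 ∉ E := (Finset.mem_sdiff.mp ha0).2
    set A' : Finset (Fin M) := insert e (A.erase a0) with hA'def
    have he_er : e ∉ A.erase a0 := fun h => heA (Finset.mem_of_mem_erase h)
    have hA' : A'.card = k - 2 := by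
      rw [hA'def, Finset.card_insert_of_notMem he_er, Finset.card_erase_of_mem ha0A, hA]
      omega
    have hA'E : (A' \ E).card = m := by
      have hset : A' \ E = (A \ E).erase a0 := by
        ext x
        simp only [hA'def, Finset.mem_sdiff, Finset.mem_erase, Finset.mem_insert]
        constructor
        · rintro ⟨h | ⟨hne, hxA⟩, hxE⟩
          · exact absurd (h ▸ heE) hxE
          · exact ⟨hne, hxA, hxE⟩
        · rintro ⟨hne, hxA, hxE⟩
          exact ⟨Or.inr ⟨hne, hxA⟩, hxE⟩
      rw [hset, Finset.card_erase_of_mem ha0, hAE]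
      omega
    have ha0A' : a0 ∉ A' := by
      rw [hA'def]
      intro h
      rcases Finset.mem_insert.mp h with h | h
      · exact ha0E (h ▸ heE)
      · exact (Finset.notMem_erase a0 A) h
    have hsets : insert a0 A' = insert e A := by
      rw [hA'def, Finset.insert_comm, Finset.insert_erase ha0A]
    set embA := A.orderEmbOfFin hA with hembA
    set embA' := A'.orderEmbOfFin hA' with hembA'
    have hι₁inj : Function.Injective ((Fin.cons e ⇑embA) ∘ Fin.cast h2) :=
      cons_cast_injective h2 embA.injective
        (by rw [Finset.range_orderEmbOfFin]; exact fun hm => heA hm)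
    have hι₂inj : Function.Injective ((Fin.cons a0 ⇑embA') ∘ Fin.cast h2) :=
      cons_cast_injective h2 embA'.injective
        (by rw [Finset.range_orderEmbOfFin]; exact fun hm => ha0A' hm)
    have hrange : Set.range ((Fin.cons e ⇑embA) ∘ Fin.cast h2)
        = Set.range ((Fin.cons a0 ⇑embA') ∘ Fin.cast h2) := by
      rw [cons_cast_range h2, cons_cast_range h2, Finset.range_orderEmbOfFin,
        Finset.range_orderEmbOfFin, ← Set.insert_eq, ← Set.insert_eq,
        ← Finset.coe_insert, ← Finset.coe_insert, hsets]
    obtain ⟨ε, hε⟩ := det_reindex (F := F) h1 _ _ hι₁inj hι₂inj hrange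
    have hYe : ((Fin.cons (gS e) fun j => gS (A.orderEmbOfFin hA j)) ∘
        Fin.cast (show k - 1 = k - 2 + 1 by omega))
        = ((Fin.cons (gS e) (⇑gS ∘ ⇑embA)) ∘ Fin.cast h2) := rfl
    have hYa : ((Fin.cons (gS a0) fun j => gS (A'.orderEmbOfFin hA' j)) ∘
        Fin.cast (show k - 1 = k - 2 + 1 by omega))
        = ((Fin.cons (gS a0) (⇑gS ∘ ⇑embA')) ∘ Fin.cast h2) := rfl
    have htrans : phiPoly 2 (⇑gS) c E ((Fin.cons (gS e) (⇑gS ∘ ⇑embA)) ∘ Fin.cast h2)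
        = phiPoly 2 (⇑gS) c E ((Fin.cons (gS a0) (⇑gS ∘ ⇑embA')) ∘ Fin.cast h2) := by
      rw [phiPoly, phiPoly]
      apply Finset.sum_congr rfl
      intro C hC
      obtain ⟨hCE, hCcard⟩ := Finset.mem_powersetCard.mp hC
      have hc2t : (E \ C).card = 2 * t := by
        rw [Finset.card_sdiff_of_subset hCE, hE, hCcard]
        omega
      congr 1
      calc (∏ z ∈ E \ C, detRows (gS z) ((Fin.cons (gS e) (⇑gS ∘ ⇑embA)) ∘ Fin.cast h2)
            / detWith (⇑gS) (gS z) C)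
          = ∏ z ∈ E \ C, ((ε : ℤ) : F) *
            (detRows (gS z) ((Fin.cons (gS a0) (⇑gS ∘ ⇑embA')) ∘ Fin.cast h2)
              / detWith (⇑gS) (gS z) C) := by
            apply Finset.prod_congr rfl
            intro z _
            rw [detRows_eq_ctup h1 h2, ctup_eq_rtup_comp h1 h2 (⇑gS) (gS z) e ⇑embA,
              hε (⇑gS) (gS z),
              detRows_eq_ctup h1 h2, ctup_eq_rtup_comp h1 h2 (⇑gS) (gS z) a0 ⇑embA',
              mul_div_assoc]
      _ = ((ε : ℤ) : F) ^ (E \ C).card * ∏ z ∈ E \ C,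
            (detRows (gS z) ((Fin.cons (gS a0) (⇑gS ∘ ⇑embA')) ∘ Fin.cast h2)
              / detWith (⇑gS) (gS z) C) := by
            rw [Finset.prod_mul_distrib, Finset.prod_const]
      _ = ∏ z ∈ E \ C, detRows (gS z) ((Fin.cons (gS a0) (⇑gS ∘ ⇑embA')) ∘ Fin.cast h2)
            / detWith (⇑gS) (gS z) C := by
            rw [hc2t, units_pow_even, one_mul]
    rw [hYe, htrans, ← hYa, IH A' hA' hA'E (gS a0)]
    have hc1 : (c (insert a0 A')) ^ 2 = (a A') ^ 2 * (f A' (gS a0)) ^ 2 := by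
      rw [hcomp.2.2 A' hA' a0 ha0A', sq_sign_mul]
    have hc2 : (c (insert e A)) ^ 2 = (a A) ^ 2 * (f A (gS e)) ^ 2 := by
      rw [hcomp.2.2 A hA e heA, sq_sign_mul]
    rw [← hc1, hsets, hc2]

end MainLemmas

end Stmt14Aux
end Stmt14AuxSec

theorem stmt14 [Fintype F] {k M t : ℕ} (hk : 3 ≤ k)
    (hq : Odd (Fintype.card F))
    (gS : Fin M ↪ (Fin k → F)) (hS : IsArc (Set.range gS)) (hMk : k ≤ M)
    (ht : M + t = Fintype.card F + k - 1)
    (f : Finset (Fin M) → (Fin k → F) → F)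
    (hf : ∀ A : Finset (Fin M), A.card = k - 2 →
      IsTangentPoly t (Set.range gS) (⇑gS '' ↑A) (f A))
    (a c : Finset (Fin M) → F)
    (hcomp : CompatibleFamilies t (⇑gS) f a c)
    (E : Finset (Fin M)) (hE : E.card = k + 2 * t - 1)
    (A : Finset (Fin M)) (hA : A.card = k - 2) (X : Fin k → F) :
    phiPoly 2 (⇑gS) c E
        ((Fin.cons X fun j => gS (A.orderEmbOfFin hA j)) ∘
          Fin.cast (by omega : k - 1 = k - 2 + 1))
      = (a A) ^ 2 * (f A X) ^ 2 :=
  Stmt14Aux.key hk gS hS hMk f hf a c hcomp E hE ((A \ E).card) A hA rfl X
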